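/- A finite simple graph G has an f-coloring if and only if for every weight function w : V(G) → ℝ>0 there exists an independent set X ⊆ V(G) with w(X) ≥ w(f). -/

import Mathlib

open MeasureTheory
open scoped Pointwise

/-- `φ` is an `f`-coloring of `G`: it assigns to each vertex a measurable subset of `[0,1]`,
adjacent vertices get disjoint sets, and the set of `v` has measure at least `f v`. -/
def IsFracColoring {V : Type*} (G : SimpleGraph V) (f : V → ℚ) (φ : V → Set ℝ) : Prop :=
  (∀ v, φ v ⊆ Set.Icc (0 : ℝ) 1) ∧
  (∀ v, MeasurableSet (φ v)) ∧
  (∀ u v, G.Adj u v → φ u ∩ φ v = ∅) ∧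
  (∀ v, ENNReal.ofReal ((f v : ℝ)) ≤ volume (φ v))

/-- A tight `f`-coloring: the measure of each `φ v` equals `f v`. -/
def IsTightFracColoring {V : Type*} (G : SimpleGraph V) (f : V → ℚ) (φ : V → Set ℝ) : Prop :=
  IsFracColoring G f φ ∧ ∀ v, volume (φ v) = ENNReal.ofReal ((f v : ℝ))

/-- `N ≥ 1` is a common denominator of `f` if `N * f v` is an integer for every `v`. -/
def IsCommonDenom {V : Type*} (N : ℕ) (f : V → ℚ) : Prop :=
  1 ≤ N ∧ ∀ v, ∃ m : ℤ, (N : ℚ) * f v = (m : ℚ)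

/-- `ψ` is an `(f,N)`-coloring of `G`: each vertex gets a subset of `{1,…,N}`,
adjacent vertices get disjoint sets, and `|ψ v| ≥ N * f v` for every vertex `v`. -/
def IsFNColoring {V : Type*} (G : SimpleGraph V) (f : V → ℚ) (N : ℕ) (ψ : V → Finset ℕ) : Prop :=
  (∀ v, ψ v ⊆ Finset.Icc 1 N) ∧
  (∀ u v, G.Adj u v → Disjoint (ψ u) (ψ v)) ∧
  (∀ v, (N : ℚ) * f v ≤ ((ψ v).card : ℚ))

/-- A tight `(f,N)`-coloring: `|ψ v| = N * f v` for every vertex `v`. -/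
def IsTightFNColoring {V : Type*} (G : SimpleGraph V) (f : V → ℚ) (N : ℕ)
    (ψ : V → Finset ℕ) : Prop :=
  IsFNColoring G f N ψ ∧ ∀ v, ((ψ v).card : ℚ) = (N : ℚ) * f v



open scoped Classical in
lemma fc_build {V : Type*} (G : SimpleGraph V) (f : V → ℚ) (k : ℕ) (lam : ℕ → ℝ)
    (hlam : ∀ j, 0 ≤ lam j) (hsum : ∑ j ∈ Finset.range k, lam j = 1)
    (X : ℕ → Finset V) (hX : ∀ j, ∀ u ∈ X j, ∀ v ∈ X j, ¬ G.Adj u v)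
    (hfd : ∀ v, (f v : ℝ) ≤ ∑ j ∈ Finset.range k, lam j * (if v ∈ X j then 1 else 0)) :
    ∃ φ, IsFracColoring G f φ := by
  classical
  set s : ℕ → ℝ := fun m => ∑ j ∈ Finset.range m, lam j with hsdef
  have hmono : Monotone s := fun a b hab =>
    Finset.sum_le_sum_of_subset_of_nonneg (Finset.range_subset_range.2 hab) (fun j _ _ => hlam j)
  have hsucc : ∀ j, s (j+1) = s j + lam j := fun j => Finset.sum_range_succ _ _
  have hs0 : s 0 = 0 := by simp [hsdef]
  have hsk : s k = 1 := hsum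
  have hIdis : ∀ i j : ℕ, i < j →
      Disjoint (Set.Ico (s i) (s (i+1))) (Set.Ico (s j) (s (j+1))) := by
    intro i j hij
    rw [Set.disjoint_left]
    intro x hxi hxj
    exact absurd (hxi.2.trans_le ((hmono hij).trans hxj.1)) (lt_irrefl x)
  have hIdis' : ∀ i j : ℕ, i ≠ j →
      Disjoint (Set.Ico (s i) (s (i+1))) (Set.Ico (s j) (s (j+1))) := by
    intro i j hij
    rcases hij.lt_or_gt with h | h
    · exact hIdis i j h
    · exact (hIdis j i h).symm
  refine ⟨fun v => ⋃ j ∈ (Finset.range k).filter (fun j => v ∈ X j),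
      Set.Ico (s j) (s (j+1)), ?_, ?_, ?_, ?_⟩
  · intro v x hx
    simp only [Set.mem_iUnion, exists_prop] at hx
    obtain ⟨j, hj, hxl, hxr⟩ := hx
    simp only [Finset.mem_filter, Finset.mem_range] at hj
    constructor
    · exact le_trans (le_of_eq hs0.symm) (le_trans (hmono (Nat.zero_le _)) hxl)
    · exact le_of_lt (lt_of_lt_of_le hxr (by rw [← hsk]; exact hmono hj.1))
  · intro v
    exact Finset.measurableSet_biUnion _ (fun j _ => measurableSet_Ico)
  · intro u v hadj
    ext x
    simp only [Set.mem_inter_iff, Set.mem_iUnion, exists_prop, Finset.mem_filter,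
      Finset.mem_range, Set.mem_empty_iff_false, iff_false, not_and]
    rintro ⟨i, ⟨hi, hui⟩, hxi⟩ ⟨j, ⟨hj, hvj⟩, hxj⟩
    rcases eq_or_ne i j with rfl | hne
    · exact hX i u hui v hvj hadj
    · exact Set.disjoint_left.1 (hIdis' i j hne) hxi hxj
  · intro v
    have hmeq : volume (⋃ j ∈ (Finset.range k).filter (fun j => v ∈ X j),
        Set.Ico (s j) (s (j+1))) =
        ∑ j ∈ (Finset.range k).filter (fun j => v ∈ X j), volume (Set.Ico (s j) (s (j+1))) := by
      apply measure_biUnion_finset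
      · intro i hi j hj hij
        exact hIdis' i j hij
      · intro j _
        exact measurableSet_Ico
    rw [hmeq]
    have : ∀ j ∈ (Finset.range k).filter (fun j => v ∈ X j),
        volume (Set.Ico (s j) (s (j+1))) = ENNReal.ofReal (lam j) := by
      intro j _
      rw [Real.volume_Ico, hsucc j]
      ring_nf
    rw [Finset.sum_congr rfl this, ← ENNReal.ofReal_sum_of_nonneg (fun j _ => hlam j)]
    apply ENNReal.ofReal_le_ofReal
    calc (f v : ℝ) ≤ ∑ j ∈ Finset.range k, lam j * (if v ∈ X j then 1 else 0) := hfd v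
      _ = ∑ j ∈ (Finset.range k).filter (fun j => v ∈ X j), lam j := by
          rw [Finset.sum_filter]
          exact Finset.sum_congr rfl (fun j _ => by by_cases h : v ∈ X j <;> simp [h])



open scoped Classical in
lemma fc_forward {V : Type*} [Fintype V] (G : SimpleGraph V) (f : V → ℚ)
    (φ : V → Set ℝ) (hφ : IsFracColoring G f φ) (w : V → ℝ) (hw : ∀ v, 0 < w v) :
    ∃ X : Finset V, (∀ u ∈ X, ∀ v ∈ X, ¬ G.Adj u v) ∧
      ∑ v, (f v : ℝ) * w v ≤ ∑ v ∈ X, w v := by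
  obtain ⟨hsub, hmeas, hdis, hvol⟩ := hφ
  by_contra hcon
  push_neg at hcon
  set c : ℝ := ∑ v, (f v : ℝ) * w v with hc
  set μ : Measure ℝ := volume.restrict (Set.Icc (0:ℝ) 1) with hμ
  have hfin : ∀ v, volume (φ v) ≠ ⊤ := by
    intro v
    refine ((measure_mono (hsub v)).trans_lt ?_).ne
    rw [Real.volume_Icc]
    exact ENNReal.ofReal_lt_top
  set F : ℝ → ℝ := fun x => ∑ v, w v * (φ v).indicator (fun _ => (1:ℝ)) x with hF
  have hFlt : ∀ x, F x < c := by
    intro x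
    have hind : ∀ u ∈ Finset.univ.filter (fun v => x ∈ φ v),
        ∀ v ∈ Finset.univ.filter (fun v => x ∈ φ v), ¬ G.Adj u v := by
      intro u hu v hv hadj
      simp only [Finset.mem_filter] at hu hv
      have := hdis u v hadj
      have : x ∈ φ u ∩ φ v := ⟨hu.2, hv.2⟩
      rw [hdis u v hadj] at this
      exact this
    have h2 := hcon _ hind
    have h3 : F x = ∑ v ∈ Finset.univ.filter (fun v => x ∈ φ v), w v := by
      rw [hF, Finset.sum_filter]
      refine Finset.sum_congr rfl (fun v _ => ?_)
      by_cases h : x ∈ φ v <;> simp [Set.indicator_apply, h]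
    rw [h3]
    exact h2
  have hint : ∀ v, Integrable ((φ v).indicator (fun _ => (1:ℝ))) μ := by
    intro v
    rw [integrable_indicator_iff (hmeas v)]
    have hlt : μ (φ v) < ⊤ := lt_of_le_of_lt (Measure.restrict_le_self _) ((hfin v).lt_top)
    exact integrableOn_const hlt.ne (by simp)
  have hFint : Integrable F μ := by
    rw [hF]
    apply integrable_finset_sum
    intro v _
    exact (hint v).const_mul (w v)
  have hIF : ∫ x, F x ∂μ = ∑ v, w v * (volume (φ v)).toReal := by
    rw [hF, integral_finset_sum _ (fun v _ => (hint v).const_mul (w v))]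
    refine Finset.sum_congr rfl (fun v _ => ?_)
    rw [MeasureTheory.integral_const_mul, integral_indicator_const (1:ℝ) (hmeas v)]
    rw [hμ, measureReal_def, Measure.restrict_apply (hmeas v), Set.inter_eq_self_of_subset_left (hsub v)]
    simp
  have hcle : c ≤ ∫ x, F x ∂μ := by
    rw [hIF, hc]
    apply Finset.sum_le_sum
    intro v _
    have h1 : (f v : ℝ) ≤ (volume (φ v)).toReal :=
      (ENNReal.ofReal_le_iff_le_toReal (hfin v)).1 (hvol v)
    rw [mul_comm]
    exact mul_le_mul_of_nonneg_left h1 (hw v).le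
  have hIc : ∫ _x, c ∂μ = c := by
    rw [integral_const, hμ]
    simp [Real.volume_Icc]
  have hle2 : ∫ x, F x ∂μ ≤ c := by
    rw [← hIc]
    exact integral_mono hFint (integrable_const c) (fun x => (hFlt x).le)
  have heq : ∫ x, F x ∂μ = c := le_antisymm hle2 hcle
  have hzero : ∫ x, (c - F x) ∂μ = 0 := by
    rw [integral_sub (integrable_const c) hFint, hIc, heq, sub_self]
  have hae : (fun x => c - F x) =ᵐ[μ] 0 := by
    refine (integral_eq_zero_iff_of_nonneg ?_ ?_).1 hzero
    · intro x
      simp only [Pi.zero_apply]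
      exact sub_nonneg.2 (hFlt x).le
    · exact (integrable_const c).sub hFint
  have hμne : μ ≠ 0 := by
    intro h0
    have := congrArg (fun m : Measure ℝ => m Set.univ) h0
    simp only [hμ, Measure.restrict_apply_univ, Real.volume_Icc] at this
    norm_num at this
  haveI : (ae μ).NeBot := ae_neBot.2 hμne
  obtain ⟨x, hx⟩ := hae.exists
  simp only [Pi.zero_apply] at hx
  exact absurd (hFlt x) (by rw [sub_eq_zero] at hx; rw [← hx]; exact lt_irrefl _)

open scoped Classical in
lemma fc_backward {V : Type*} [Fintype V] (G : SimpleGraph V) (f : V → ℚ)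
    (hf : ∀ v, 0 ≤ f v ∧ f v ≤ 1)
    (h : ∀ w : V → ℝ, (∀ v, 0 < w v) →
        ∃ X : Finset V, (∀ u ∈ X, ∀ v ∈ X, ¬ G.Adj u v) ∧
          ∑ v, (f v : ℝ) * w v ≤ ∑ v ∈ X, w v) :
    ∃ φ, IsFracColoring G f φ := by
  set fR : V → ℝ := fun v => (f v : ℝ) with hfR
  set ind : Finset V → (V → ℝ) := fun X v => if v ∈ X then (1:ℝ) else 0 with hind
  set A : Set (V → ℝ) := {g | ∃ X : Finset V, (∀ u ∈ X, ∀ v ∈ X, ¬ G.Adj u v) ∧ g = ind X}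
    with hA
  have hAfin : A.Finite := by
    apply Set.Finite.subset (Set.finite_range ind)
    rintro g ⟨X, _, rfl⟩
    exact ⟨X, rfl⟩
  set C : Set (V → ℝ) := Set.pi Set.univ (fun _ : V => Set.Iic (0:ℝ)) with hC
  have hCclosed : IsClosed C := isClosed_set_pi (fun v _ => isClosed_Iic)
  have hCconv : Convex ℝ C := convex_pi (fun v _ => convex_Iic 0)
  set K : Set (V → ℝ) := convexHull ℝ A + C with hK
  have hKconv : Convex ℝ K := (convex_convexHull ℝ A).add hCconv
  have hKclosed : IsClosed K := hCclosed.add_left_of_isCompact (hAfin.isCompact_convexHull (𝕜 := ℝ))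
  have hzeroC : (0 : V → ℝ) ∈ C := by
    intro v _
    simp
  have hindK : ∀ X : Finset V, (∀ u ∈ X, ∀ v ∈ X, ¬ G.Adj u v) → ind X ∈ K := by
    intro X hX
    have : ind X + 0 ∈ K := Set.add_mem_add (subset_convexHull ℝ A ⟨X, hX, rfl⟩) hzeroC
    rwa [add_zero] at this
  have hmem : fR ∈ K := by
    by_contra hKmem
    obtain ⟨L, u, hlt, hgt⟩ := geometric_hahn_banach_closed_point hKconv hKclosed hKmem
    set w0 : V → ℝ := fun v => L (Pi.single v (1:ℝ)) with hw0def
    have hrepr : ∀ y : V → ℝ, L y = ∑ v, y v * w0 v := by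
      intro y
      have hy : y = ∑ v, y v • (Pi.single v (1:ℝ) : V → ℝ) := by
        have := Finset.univ_sum_single y
        rw [← this]
        refine Finset.sum_congr rfl (fun v _ => ?_)
        funext u'
        simp [Pi.single_apply]
      calc L y = L (∑ v, y v • (Pi.single v (1:ℝ) : V → ℝ)) := by rw [← hy]
        _ = ∑ v, y v * w0 v := by
            rw [map_sum]
            exact Finset.sum_congr rfl (fun v _ => by rw [_root_.map_smul]; rfl)
    have hindlt : ∀ X : Finset V, (∀ u ∈ X, ∀ v ∈ X, ¬ G.Adj u v) →
        ∑ v ∈ X, w0 v < u := by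
      intro X hX
      have h1 := hlt _ (hindK X hX)
      rw [hrepr] at h1
      have h2 : ∑ v, ind X v * w0 v = ∑ v ∈ X, w0 v := by
        rw [hind]
        simp only [ite_mul, one_mul, zero_mul]
        rw [Finset.sum_ite_mem, Finset.univ_inter]
      rwa [h2] at h1
    have hw0 : ∀ v, 0 ≤ w0 v := by
      intro v
      by_contra hneg
      push_neg at hneg
      set t : ℝ := (max u 0 + 1) / (-(w0 v)) with ht
      have htpos : 0 ≤ t := div_nonneg (by positivity) (by linarith)
      have hCt : (-t) • (Pi.single v (1:ℝ) : V → ℝ) ∈ C := by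
        intro v' _
        simp only [Pi.smul_apply, smul_eq_mul, Set.mem_Iic]
        rcases eq_or_ne v' v with rfl | hne
        · simp only [Pi.single_eq_same, mul_one]
          linarith
        · simp [Pi.single_eq_of_ne hne]
      have hmemK : ind ∅ + (-t) • (Pi.single v (1:ℝ) : V → ℝ) ∈ K :=
        Set.add_mem_add (subset_convexHull ℝ A ⟨∅, by simp, rfl⟩) hCt
      have h1 := hlt _ hmemK
      have hind0 : ind (∅ : Finset V) = 0 := by
        funext v'; simp [hind]
      rw [hind0, zero_add, _root_.map_smul, smul_eq_mul] at h1
      have h2 : -t * w0 v = max u 0 + 1 := by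
        have hne : -w0 v ≠ 0 := by linarith
        have h3 : -t * w0 v = t * (-w0 v) := by ring
        rw [h3, ht, div_mul_cancel₀ _ hne]
      rw [h2] at h1
      have := le_max_left u 0
      linarith
    set δ : ℝ := L fR - u with hδdef
    have hδ : 0 < δ := sub_pos.2 hgt
    set n : ℕ := Fintype.card V with hn
    set ε : ℝ := δ / (2 * (n + 1)) with hε
    have hεpos : 0 < ε := by positivity
    obtain ⟨X, hXind, hXw⟩ := h (fun v => w0 v + ε) (fun v => by have := hw0 v; show 0 < w0 v + ε; linarith)
    have h1 : L fR ≤ ∑ v, fR v * (w0 v + ε) := by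
      rw [hrepr fR]
      apply Finset.sum_le_sum
      intro v _
      have h0 : (0:ℝ) ≤ fR v := by
        show (0:ℝ) ≤ (f v : ℝ)
        exact_mod_cast (hf v).1
      nlinarith
    have h2 : ∑ v ∈ X, (w0 v + ε) < u + δ := by
      rw [Finset.sum_add_distrib, Finset.sum_const, nsmul_eq_mul]
      have hcard : (X.card : ℝ) ≤ n := by
        rw [hn]
        exact_mod_cast Finset.card_le_univ X
      have hXs := hindlt X hXind
      have hεn : (X.card : ℝ) * ε < δ := by
        have hme : ε * (2 * (n + 1)) = δ := by
          rw [hε]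
          field_simp
        nlinarith
      linarith
    have := hXw
    have hfin : L fR < L fR := by
      calc L fR ≤ ∑ v, fR v * (w0 v + ε) := h1
        _ ≤ ∑ v ∈ X, (w0 v + ε) := hXw
        _ < u + δ := h2
        _ = L fR := by rw [hδdef]; ring
    exact lt_irrefl _ hfin
  -- extract convex combination
  obtain ⟨d, hd, c0, hc0, hsum'⟩ := hmem
  have hfled : ∀ v, fR v ≤ d v := by
    intro v
    have h1 : d v + c0 v = fR v := congrFun hsum' v
    have h2 : c0 v ≤ 0 := hc0 v (Set.mem_univ v)
    linarith
  rw [mem_convexHull_iff_exists_fintype] at hd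
  obtain ⟨ι, hι, wgt, z, hw0', hw1, hzA, hzsum⟩ := hd
  set k : ℕ := Fintype.card ι with hk
  set e : Fin k ≃ ι := (Fintype.equivFin ι).symm with he
  set Xc : ι → Finset V := fun i => (hzA i).choose with hXc
  have hXcspec : ∀ i, (∀ u ∈ Xc i, ∀ v ∈ Xc i, ¬ G.Adj u v) ∧ z i = ind (Xc i) :=
    fun i => (hzA i).choose_spec
  set lam : ℕ → ℝ := fun j => if hj : j < k then wgt (e ⟨j, hj⟩) else 0 with hlamdef
  set XN : ℕ → Finset V := fun j => if hj : j < k then Xc (e ⟨j, hj⟩) else ∅ with hXN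
  have hrangeconv : ∀ g : ι → ℝ,
      ∑ j ∈ Finset.range k, (if hj : j < k then g (e ⟨j, hj⟩) else 0) = ∑ i, g i := by
    intro g
    rw [← Fin.sum_univ_eq_sum_range (fun j => if hj : j < k then g (e ⟨j, hj⟩) else 0) k]
    rw [← Equiv.sum_comp e g]
    refine Finset.sum_congr rfl (fun j _ => ?_)
    rw [dif_pos j.isLt]
  refine fc_build G f k lam ?_ ?_ XN ?_ ?_
  · intro j
    show 0 ≤ (if hj : j < k then wgt (e ⟨j, hj⟩) else 0)
    split
    · exact hw0' _
    · exact le_refl 0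
  · show (∑ j ∈ Finset.range k, if hj : j < k then wgt (e ⟨j, hj⟩) else 0) = 1
    rw [hrangeconv wgt, hw1]
  · intro j u hu v hv
    by_cases hj : j < k
    · have hu' : u ∈ Xc (e ⟨j, hj⟩) := by rwa [show XN j = Xc (e ⟨j, hj⟩) from dif_pos hj] at hu
      have hv' : v ∈ Xc (e ⟨j, hj⟩) := by rwa [show XN j = Xc (e ⟨j, hj⟩) from dif_pos hj] at hv
      exact (hXcspec _).1 u hu' v hv'
    · rw [show XN j = ∅ from dif_neg hj] at hu
      simp at hu
  · intro v
    refine le_trans (hfled v) ?_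
    have hdv : d v = ∑ i, wgt i * (if v ∈ Xc i then 1 else 0) := by
      rw [← hzsum]
      rw [Finset.sum_apply]
      refine Finset.sum_congr rfl (fun i _ => ?_)
      rw [Pi.smul_apply, smul_eq_mul, (hXcspec i).2]
    rw [hdv]
    rw [← hrangeconv (fun i => wgt i * (if v ∈ Xc i then 1 else 0))]
    apply le_of_eq
    refine Finset.sum_congr rfl (fun j hj => ?_)
    rw [Finset.mem_range] at hj
    show (if hj : j < k then wgt (e ⟨j, hj⟩) * if v ∈ Xc (e ⟨j, hj⟩) then (1:ℝ) else 0 else 0)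
      = lam j * if v ∈ XN j then 1 else 0
    rw [show lam j = wgt (e ⟨j, hj⟩) from dif_pos hj,
      show XN j = Xc (e ⟨j, hj⟩) from dif_pos hj, dif_pos hj]

/-- `G` has an `f`-coloring iff for every positive weight function `w` there is an
independent set `X` with `w(X) ≥ w(f)`. -/
theorem stmt2 {V : Type*} [Fintype V] (G : SimpleGraph V) (f : V → ℚ)
    (hf : ∀ v, 0 ≤ f v ∧ f v ≤ 1) :
    (∃ φ, IsFracColoring G f φ) ↔
      (∀ w : V → ℝ, (∀ v, 0 < w v) →
        ∃ X : Finset V, (∀ u ∈ X, ∀ v ∈ X, ¬ G.Adj u v) ∧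
          ∑ v, (f v : ℝ) * w v ≤ ∑ v ∈ X, w v) := by
  constructor
  · rintro ⟨φ, hφ⟩ w hw
    exact fc_forward G f φ hφ w hw
  · intro h
    exact fc_backward G f hf h
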